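/- arXiv:2601.07482 — 6 statements merged into one kernel-verified Lean document; each statement's English description precedes it below -/
import Mathlib

section
/- For every natural number m ≥ 1 and all real numbers τ, β with 0 < τ ≤ β, the interval integral ∫_τ^β (1 - (1-t)^{m-1})·(τ/t) dt equals τ·Σ_{i=1}^{m-1} C(m-1,i)·(-1)^{i+1}·(β^i - τ^i)/i. -/
lemma binom_expand (n : ℕ) (t : ℝ) :
    1 - (1 - t) ^ n = ∑ i ∈ Finset.Icc 1 n, (n.choose i : ℝ) * (-1) ^ (i + 1) * t ^ i := by
  have h1 : (1 - t) ^ n = ∑ m ∈ Finset.range (n + 1), (n.choose m : ℝ) * (-1) ^ m * t ^ m := by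
    calc (1 - t) ^ n = (-t + 1) ^ n := by ring_nf
      _ = ∑ m ∈ Finset.range (n + 1), (-t) ^ m * 1 ^ (n - m) * (n.choose m : ℝ) := add_pow _ _ _
      _ = _ := by
          refine Finset.sum_congr rfl fun m _ => ?_
          rw [neg_pow]; ring
  rw [h1, Finset.sum_range_succ', ← Finset.Ico_add_one_right_eq_Icc, Finset.sum_Ico_eq_sum_range]
  simp only [pow_zero, Nat.choose_zero_right, Nat.cast_one, one_mul, mul_one,
    Nat.add_sub_cancel]
  rw [show (1:ℝ) - (∑ i ∈ Finset.range n, (n.choose (i+1) : ℝ) * (-1)^(i+1) * t^(i+1) + 1)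
    = ∑ i ∈ Finset.range n, -((n.choose (i+1) : ℝ) * (-1)^(i+1) * t^(i+1)) by
      rw [Finset.sum_neg_distrib]; ring]
  refine Finset.sum_congr rfl fun i _ => ?_
  rw [show 1 + i = i + 1 by ring]
  ring

theorem stmt_3 (m : ℕ) (hm : 1 ≤ m) (τ β : ℝ) (hτ : 0 < τ) (hτβ : τ ≤ β) :
    ∫ t in τ..β, (1 - (1 - t) ^ (m - 1)) * (τ / t) =
      τ * ∑ i ∈ Finset.Icc 1 (m - 1),
        ((m - 1).choose i : ℝ) * (-1) ^ (i + 1) * (β ^ i - τ ^ i) / i := by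
  set n := m - 1 with hn
  have hcong : ∫ t in τ..β, (1 - (1 - t) ^ n) * (τ / t) =
      ∫ t in τ..β, ∑ i ∈ Finset.Icc 1 n, (n.choose i : ℝ) * (-1) ^ (i + 1) * τ * t ^ (i - 1) := by
    apply intervalIntegral.integral_congr
    intro t ht
    rw [Set.uIcc_of_le hτβ] at ht
    have ht0 : t ≠ 0 := ne_of_gt (lt_of_lt_of_le hτ ht.1)
    simp only
    rw [binom_expand, Finset.sum_mul]
    refine Finset.sum_congr rfl fun i hi => ?_
    have hi1 : 1 ≤ i := (Finset.mem_Icc.mp hi).1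
    have : t ^ i = t ^ (i - 1) * t := by
      rw [← pow_succ, Nat.sub_add_cancel hi1]
    rw [this]
    field_simp
  rw [hcong, intervalIntegral.integral_finset_sum, Finset.mul_sum]
  · refine Finset.sum_congr rfl fun i hi => ?_
    have hi1 : 1 ≤ i := (Finset.mem_Icc.mp hi).1
    have hint : ∫ t in τ..β, (n.choose i : ℝ) * (-1) ^ (i + 1) * τ * t ^ (i - 1)
        = (n.choose i : ℝ) * (-1) ^ (i + 1) * τ * ((β ^ (i-1+1) - τ ^ (i-1+1)) / ((i-1 : ℕ)+1)) := by
      rw [intervalIntegral.integral_const_mul, integral_pow]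
    rw [hint, Nat.sub_add_cancel hi1, Nat.cast_sub hi1, Nat.cast_one, sub_add_cancel]
    have : ((i : ℝ)) ≠ 0 := Nat.cast_ne_zero.mpr (by omega)
    field_simp
  · intro i _
    exact (Continuous.intervalIntegrable (by continuity) _ _)
end

section
/- For every natural number k ≥ 0 and every real number τ with 0 < τ ≤ 1, the iterated integral ∫_0^τ ( ∫_τ^1 [ (τ/t)·(1 - (1-t)^k) + (1-t)^k ] dt ) dβ equals τ·[ -τ·Σ_{i=1}^{k} C(k,i)·(-1)^i·(1 - τ^i)/i + (1-τ)^{k+1}/(k+1) ]. -/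
theorem stmt_9 (k : ℕ) (τ : ℝ) (hτ : 0 < τ) (hτ1 : τ ≤ 1) :
    ∫ _β in (0:ℝ)..τ, (∫ t in τ..1, ((τ / t) * (1 - (1 - t) ^ k) + (1 - t) ^ k)) =
      τ * (-τ * (∑ i ∈ Finset.Icc 1 k,
            (k.choose i : ℝ) * (-1) ^ i * (1 - τ ^ i) / i)
          + (1 - τ) ^ (k + 1) / (k + 1)) := by
  have hsetsplit : Finset.range (k+1) = insert 0 (Finset.Icc 1 k) := by
    ext x; simp [Nat.lt_succ_iff]; omega
  -- pointwise rewrite of integrand for t ≠ 0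
  have hpoly : ∀ t : ℝ, t ≠ 0 →
      (τ / t) * (1 - (1 - t) ^ k) + (1 - t) ^ k
      = (∑ i ∈ Finset.Icc 1 k, τ * (k.choose i : ℝ) * (-1)^(i-1) * t^(i-1)) + (1 - t)^k := by
    intro t ht
    have hb : (1 - t)^k = ∑ i ∈ Finset.range (k+1), (-t)^i * (k.choose i : ℝ) := by
      have := add_pow (-t) (1:ℝ) k
      rw [show (1:ℝ) - t = -t + 1 by ring, this]
      simp
    have h1 : 1 - (1-t)^k = -∑ i ∈ Finset.Icc 1 k, (-t)^i * (k.choose i : ℝ) := by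
      rw [hb, hsetsplit, Finset.sum_insert (by simp)]
      simp
    rw [h1]
    congr 1
    rw [mul_neg, Finset.mul_sum, ← Finset.sum_neg_distrib]
    apply Finset.sum_congr rfl
    intro i hi
    obtain ⟨j, rfl⟩ : ∃ j, i = j + 1 := by
      rcases Nat.exists_eq_add_of_le (Finset.mem_Icc.mp hi).1 with ⟨j, hj⟩
      exact ⟨j, by omega⟩
    simp only [Nat.add_sub_cancel]
    field_simp
    ring
  have hinner : (∫ t in τ..1, ((τ / t) * (1 - (1 - t) ^ k) + (1 - t) ^ k))
      = -τ * (∑ i ∈ Finset.Icc 1 k,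
            (k.choose i : ℝ) * (-1) ^ i * (1 - τ ^ i) / i)
          + (1 - τ) ^ (k + 1) / (k + 1) := by
    have hcongr : Set.EqOn (fun t => (τ / t) * (1 - (1 - t) ^ k) + (1 - t) ^ k)
        (fun t => (∑ i ∈ Finset.Icc 1 k, τ * (k.choose i : ℝ) * (-1)^(i-1) * t^(i-1)) + (1 - t)^k)
        (Set.uIcc τ 1) := by
      intro t htmem
      rw [Set.uIcc_of_le hτ1] at htmem
      exact hpoly t (ne_of_gt (lt_of_lt_of_le hτ htmem.1))
    rw [intervalIntegral.integral_congr hcongr]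
    have hint1 : IntervalIntegrable
        (fun t : ℝ => ∑ i ∈ Finset.Icc 1 k, τ * (k.choose i : ℝ) * (-1)^(i-1) * t^(i-1))
        MeasureTheory.volume τ 1 := by
      apply Continuous.intervalIntegrable; continuity
    have hint2 : IntervalIntegrable (fun t : ℝ => (1 - t)^k) MeasureTheory.volume τ 1 := by
      apply Continuous.intervalIntegrable; continuity
    rw [intervalIntegral.integral_add hint1 hint2]
    have hA : (∫ t in τ..1, ∑ i ∈ Finset.Icc 1 k, τ * (k.choose i : ℝ) * (-1)^(i-1) * t^(i-1))
        = -τ * (∑ i ∈ Finset.Icc 1 k, (k.choose i : ℝ) * (-1) ^ i * (1 - τ ^ i) / i) := by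
      rw [intervalIntegral.integral_finset_sum]
      · rw [neg_mul, Finset.mul_sum, ← Finset.sum_neg_distrib]
        apply Finset.sum_congr rfl
        intro i hi
        obtain ⟨j, rfl⟩ : ∃ j, i = j + 1 := by
          rcases Nat.exists_eq_add_of_le (Finset.mem_Icc.mp hi).1 with ⟨j, hj⟩
          exact ⟨j, by omega⟩
        simp only [Nat.add_sub_cancel]
        rw [intervalIntegral.integral_const_mul, integral_pow]
        push_cast
        field_simp
        ring
      · intro i hi
        apply Continuous.intervalIntegrable; continuity
    have hB : (∫ t in τ..1, (1 - t)^k) = (1 - τ) ^ (k + 1) / (k + 1) := by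
      have := intervalIntegral.integral_comp_sub_left (a := τ) (b := 1) (fun x : ℝ => x ^ k) 1
      rw [this]
      simp [integral_pow]
    rw [hA, hB]
  rw [intervalIntegral.integral_const, hinner]
  simp [smul_eq_mul]
end

section
/- Fix natural numbers m ≥ 1, k ≥ 0, m₂ ≥ 0, real numbers δ and γ, and a real number τ with 0 < τ ≤ 1. Define for β ∈ (0,1] the function C₄(β) = τ·Σ_{i=1}^{m-1} C(m-1,i)·(-1)^{i+1}·(β^i - τ^i)/i + τ·Σ_{i=1}^{k} C(k,i)·(-1)^{i+1}·(1 - β^i)/i + ((1-β)^{k+1}/(k+1))·[ (1 - (1-β)^{m₂})·(1-δ)·(τ/β) + (1-β)^{m₂}·(1-γ) ]. Then ∫_τ^1 C₄(β) dβ = τ·Σ_{i=1}^{m-1} C(m-1,i)·(-1)^{i+1}·( (1-τ^{i+1})/(i(i+1)) - τ^i·(1-τ)/i ) + τ·Σ_{i=1}^{k} C(k,i)·(-1)^{i+1}·( (1-τ)/i - (1-τ^{i+1})/(i(i+1)) ) + ((1-δ)·τ/(k+1))·[ Σ_{i=1}^{k+1} C(k+1,i)·(-1)^i·(1-τ^i)/i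 - Σ_{i=1}^{k+1+m₂} C(k+1+m₂,i)·(-1)^i·(1-τ^i)/i ] + ((1-γ)/(k+1))·(1-τ)^{k+2+m₂}/(k+2+m₂). -/
lemma aux_key (n : ℕ) (x : ℝ) :
    ∑ i ∈ Finset.Icc 1 n, (n.choose i : ℝ) * (-1) ^ i * x ^ i = (1 - x) ^ n - 1 := by
  have h : (1 - x) ^ n = ∑ i ∈ Finset.range (n + 1), (-x) ^ i * 1 ^ (n - i) * (n.choose i : ℝ) := by
    rw [← add_pow]; ring_nf
  have hIcc : Finset.Icc 1 n = Finset.Ico 1 (n + 1) := by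
    rw [Finset.Ico_add_one_right_eq_Icc]
  rw [hIcc, Finset.sum_Ico_eq_sum_range, h, Finset.sum_range_succ']
  simp only [Nat.add_sub_cancel, one_pow, pow_zero, mul_one, Nat.choose_zero_right, Nat.cast_one]
  rw [add_sub_cancel_right]
  refine Finset.sum_congr rfl fun i _ => ?_
  rw [add_comm 1 i]
  ring

lemma aux_pow_div (i : ℕ) (x : ℝ) :
    HasDerivAt (fun y : ℝ => y ^ (i + 1) / (i + 1)) (x ^ i) x := by
  have h := (hasDerivAt_pow (i + 1) x).div_const ((i : ℝ) + 1)
  have hne : ((i : ℝ) + 1) ≠ 0 := by positivity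
  refine h.congr_deriv ?_
  rw [Nat.add_sub_cancel]
  push_cast
  field_simp

lemma aux_pow_div' (i : ℕ) (hi : 1 ≤ i) (x : ℝ) :
    HasDerivAt (fun y : ℝ => y ^ i / i) (x ^ (i - 1)) x := by
  have h := (hasDerivAt_pow i x).div_const (i : ℝ)
  have hne : (i : ℝ) ≠ 0 := by
    have : 0 < i := hi
    positivity
  refine h.congr_deriv ?_
  field_simp

lemma aux_neg (K : ℕ) (x : ℝ) :
    HasDerivAt (fun y : ℝ => -((1 - y) ^ (K + 1) / ((K : ℝ) + 1))) ((1 - x) ^ K) x := by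
  have h : HasDerivAt (fun y : ℝ => (1 : ℝ) - y) (-1) x := (hasDerivAt_id x).const_sub 1
  have h2 := ((h.pow (K + 1)).div_const ((K : ℝ) + 1)).neg
  have hne : ((K : ℝ) + 1) ≠ 0 := by positivity
  refine h2.congr_deriv ?_
  simp only [Nat.add_sub_cancel]
  push_cast
  field_simp

noncomputable def Faux (m k m₂ : ℕ) (δ γ τ : ℝ) (x : ℝ) : ℝ :=
  τ * (∑ i ∈ Finset.Icc 1 (m - 1),
      ((m - 1).choose i : ℝ) * (-1) ^ (i + 1) * (x ^ (i + 1) / (i + 1) - τ ^ i * x) / i)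
  + τ * (∑ i ∈ Finset.Icc 1 k,
      (k.choose i : ℝ) * (-1) ^ (i + 1) * (x - x ^ (i + 1) / (i + 1)) / i)
  + (1 - δ) * τ / ((k : ℝ) + 1) *
      ((∑ i ∈ Finset.Icc 1 (k + 1), ((k + 1).choose i : ℝ) * (-1) ^ i * (x ^ i / i))
        - (∑ i ∈ Finset.Icc 1 (k + 1 + m₂), ((k + 1 + m₂).choose i : ℝ) * (-1) ^ i * (x ^ i / i)))
  + (1 - γ) / ((k : ℝ) + 1) *
      (-((1 - x) ^ ((k + 1 + m₂) + 1) / (((k + 1 + m₂ : ℕ) : ℝ) + 1)))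

lemma Faux_hasDeriv (m k m₂ : ℕ) (δ γ τ : ℝ) (x : ℝ) (hx : x ≠ 0) :
    HasDerivAt (Faux m k m₂ δ γ τ)
      (τ * (∑ i ∈ Finset.Icc 1 (m - 1),
            ((m - 1).choose i : ℝ) * (-1) ^ (i + 1) * (x ^ i - τ ^ i) / i)
        + τ * (∑ i ∈ Finset.Icc 1 k,
            (k.choose i : ℝ) * (-1) ^ (i + 1) * (1 - x ^ i) / i)
        + ((1 - x) ^ (k + 1) / (k + 1)) *
            ((1 - (1 - x) ^ m₂) * (1 - δ) * (τ / x) + (1 - x) ^ m₂ * (1 - γ))) x := by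
  have hterm1 : ∀ i ∈ Finset.Icc 1 (m - 1),
      HasDerivAt (fun y : ℝ =>
          ((m - 1).choose i : ℝ) * (-1) ^ (i + 1) * (y ^ (i + 1) / (i + 1) - τ ^ i * y) / i)
        (((m - 1).choose i : ℝ) * (-1) ^ (i + 1) * (x ^ i - τ ^ i) / i) x := by
    intro i _
    have h := (((aux_pow_div i x).sub ((hasDerivAt_id' x).const_mul (τ ^ i))).const_mul
        (((m - 1).choose i : ℝ) * (-1) ^ (i + 1))).div_const (i : ℝ)
    refine h.congr_deriv ?_
    ring
  have hterm2 : ∀ i ∈ Finset.Icc 1 k,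
      HasDerivAt (fun y : ℝ =>
          (k.choose i : ℝ) * (-1) ^ (i + 1) * (y - y ^ (i + 1) / (i + 1)) / i)
        ((k.choose i : ℝ) * (-1) ^ (i + 1) * (1 - x ^ i) / i) x := by
    intro i _
    have h := (((hasDerivAt_id' x).sub (aux_pow_div i x)).const_mul
        ((k.choose i : ℝ) * (-1) ^ (i + 1))).div_const (i : ℝ)
    exact h
  have hterm3 : ∀ i ∈ Finset.Icc 1 (k + 1),
      HasDerivAt (fun y : ℝ => ((k + 1).choose i : ℝ) * (-1) ^ i * (y ^ i / i))
        (((k + 1).choose i : ℝ) * (-1) ^ i * x ^ (i - 1)) x := by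
    intro i hi
    exact (aux_pow_div' i (Finset.mem_Icc.mp hi).1 x).const_mul _
  have hterm4 : ∀ i ∈ Finset.Icc 1 (k + 1 + m₂),
      HasDerivAt (fun y : ℝ => ((k + 1 + m₂).choose i : ℝ) * (-1) ^ i * (y ^ i / i))
        (((k + 1 + m₂).choose i : ℝ) * (-1) ^ i * x ^ (i - 1)) x := by
    intro i hi
    exact (aux_pow_div' i (Finset.mem_Icc.mp hi).1 x).const_mul _
  have hF : HasDerivAt (Faux m k m₂ δ γ τ)
      (τ * (∑ i ∈ Finset.Icc 1 (m - 1),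
            ((m - 1).choose i : ℝ) * (-1) ^ (i + 1) * (x ^ i - τ ^ i) / i)
        + τ * (∑ i ∈ Finset.Icc 1 k,
            (k.choose i : ℝ) * (-1) ^ (i + 1) * (1 - x ^ i) / i)
        + (1 - δ) * τ / ((k : ℝ) + 1) *
            ((∑ i ∈ Finset.Icc 1 (k + 1), ((k + 1).choose i : ℝ) * (-1) ^ i * x ^ (i - 1))
              - (∑ i ∈ Finset.Icc 1 (k + 1 + m₂),
                  ((k + 1 + m₂).choose i : ℝ) * (-1) ^ i * x ^ (i - 1)))
        + (1 - γ) / ((k : ℝ) + 1) * (1 - x) ^ (k + 1 + m₂)) x := by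
    exact ((((HasDerivAt.fun_sum hterm1).const_mul τ).add
        ((HasDerivAt.fun_sum hterm2).const_mul τ)).add
        (((HasDerivAt.fun_sum hterm3).sub (HasDerivAt.fun_sum hterm4)).const_mul
          ((1 - δ) * τ / ((k : ℝ) + 1)))).add
        ((aux_neg (k + 1 + m₂) x).const_mul ((1 - γ) / ((k : ℝ) + 1)))
  have e1 : ∀ n : ℕ, (∑ i ∈ Finset.Icc 1 n, (n.choose i : ℝ) * (-1) ^ i * x ^ (i - 1))
      = ((1 - x) ^ n - 1) / x := by
    intro n
    rw [eq_div_iff hx, ← aux_key n x, Finset.sum_mul]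
    refine Finset.sum_congr rfl fun i hi => ?_
    have h1 : 1 ≤ i := (Finset.mem_Icc.mp hi).1
    have hpow : x ^ (i - 1) * x = x ^ i := by
      rw [← pow_succ]; congr 1; omega
    rw [mul_assoc, hpow]
  rw [e1, e1] at hF
  have e3 : (1 - δ) * τ / ((k : ℝ) + 1) *
        ((((1 - x) ^ (k + 1) - 1) / x) - (((1 - x) ^ (k + 1 + m₂) - 1) / x))
      + (1 - γ) / ((k : ℝ) + 1) * (1 - x) ^ (k + 1 + m₂)
      = ((1 - x) ^ (k + 1) / ((k : ℝ) + 1)) *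
          ((1 - (1 - x) ^ m₂) * (1 - δ) * (τ / x) + (1 - x) ^ m₂ * (1 - γ)) := by
    have hk : ((k : ℝ) + 1) ≠ 0 := by positivity
    field_simp
    ring
  convert hF using 1
  rw [← e3]
  ring

theorem stmt_10 (m k m₂ : ℕ) (hm : 1 ≤ m) (δ γ τ : ℝ) (hτ : 0 < τ) (hτ1 : τ ≤ 1) :
    ∫ β in τ..1,
        (τ * (∑ i ∈ Finset.Icc 1 (m - 1),
            ((m - 1).choose i : ℝ) * (-1) ^ (i + 1) * (β ^ i - τ ^ i) / i)
          + τ * (∑ i ∈ Finset.Icc 1 k,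
            (k.choose i : ℝ) * (-1) ^ (i + 1) * (1 - β ^ i) / i)
          + ((1 - β) ^ (k + 1) / (k + 1)) *
            ((1 - (1 - β) ^ m₂) * (1 - δ) * (τ / β) + (1 - β) ^ m₂ * (1 - γ))) =
      τ * (∑ i ∈ Finset.Icc 1 (m - 1),
          ((m - 1).choose i : ℝ) * (-1) ^ (i + 1) *
            ((1 - τ ^ (i + 1)) / (i * (i + 1)) - τ ^ i * (1 - τ) / i))
        + τ * (∑ i ∈ Finset.Icc 1 k,
          (k.choose i : ℝ) * (-1) ^ (i + 1) *
            ((1 - τ) / i - (1 - τ ^ (i + 1)) / (i * (i + 1))))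
        + ((1 - δ) * τ / (k + 1)) *
          ((∑ i ∈ Finset.Icc 1 (k + 1),
              ((k + 1).choose i : ℝ) * (-1) ^ i * (1 - τ ^ i) / i)
            - (∑ i ∈ Finset.Icc 1 (k + 1 + m₂),
              ((k + 1 + m₂).choose i : ℝ) * (-1) ^ i * (1 - τ ^ i) / i))
        + ((1 - γ) / (k + 1)) * (1 - τ) ^ (k + 2 + m₂) / (k + 2 + m₂) := by
  have huIcc : Set.uIcc τ 1 = Set.Icc τ 1 := Set.uIcc_of_le hτ1
  have hpos : ∀ x ∈ Set.uIcc τ 1, x ≠ 0 := by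
    intro x hx
    rw [huIcc] at hx
    exact (lt_of_lt_of_le hτ hx.1).ne'
  have hderiv : ∀ x ∈ Set.uIcc τ 1, HasDerivAt (Faux m k m₂ δ γ τ)
      (τ * (∑ i ∈ Finset.Icc 1 (m - 1),
            ((m - 1).choose i : ℝ) * (-1) ^ (i + 1) * (x ^ i - τ ^ i) / i)
        + τ * (∑ i ∈ Finset.Icc 1 k,
            (k.choose i : ℝ) * (-1) ^ (i + 1) * (1 - x ^ i) / i)
        + ((1 - x) ^ (k + 1) / (k + 1)) *
            ((1 - (1 - x) ^ m₂) * (1 - δ) * (τ / x) + (1 - x) ^ m₂ * (1 - γ))) x :=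
    fun x hx => Faux_hasDeriv m k m₂ δ γ τ x (hpos x hx)
  have hint : IntervalIntegrable (fun β : ℝ =>
      (τ * (∑ i ∈ Finset.Icc 1 (m - 1),
            ((m - 1).choose i : ℝ) * (-1) ^ (i + 1) * (β ^ i - τ ^ i) / i)
        + τ * (∑ i ∈ Finset.Icc 1 k,
            (k.choose i : ℝ) * (-1) ^ (i + 1) * (1 - β ^ i) / i)
        + ((1 - β) ^ (k + 1) / (k + 1)) *
            ((1 - (1 - β) ^ m₂) * (1 - δ) * (τ / β) + (1 - β) ^ m₂ * (1 - γ)))) MeasureTheory.volume τ 1 := by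
    apply ContinuousOn.intervalIntegrable
    apply ContinuousOn.add
    apply ContinuousOn.add
    · exact (Continuous.continuousOn (by fun_prop))
    · exact (Continuous.continuousOn (by fun_prop))
    · apply ContinuousOn.mul
      · exact (Continuous.continuousOn (by fun_prop))
      · apply ContinuousOn.add
        · apply ContinuousOn.mul
          · exact (Continuous.continuousOn (by fun_prop))
          · exact continuousOn_const.div continuousOn_id hpos
        · exact (Continuous.continuousOn (by fun_prop))
  rw [intervalIntegral.integral_eq_sub_of_hasDerivAt hderiv hint]
  -- now : Faux … 1 - Faux … τ = RHS
  have hS1 : (∑ i ∈ Finset.Icc 1 (m - 1),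
        ((m - 1).choose i : ℝ) * (-1) ^ (i + 1) * ((1:ℝ) ^ (i + 1) / (i + 1) - τ ^ i * 1) / i)
      - (∑ i ∈ Finset.Icc 1 (m - 1),
        ((m - 1).choose i : ℝ) * (-1) ^ (i + 1) * (τ ^ (i + 1) / (i + 1) - τ ^ i * τ) / i)
      = ∑ i ∈ Finset.Icc 1 (m - 1),
          ((m - 1).choose i : ℝ) * (-1) ^ (i + 1) *
            ((1 - τ ^ (i + 1)) / (i * (i + 1)) - τ ^ i * (1 - τ) / i) := by
    rw [← Finset.sum_sub_distrib]
    refine Finset.sum_congr rfl fun i hi => ?_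
    have h1 : 1 ≤ i := (Finset.mem_Icc.mp hi).1
    have hi0 : (i : ℝ) ≠ 0 := by
      have : 0 < i := h1
      positivity
    have hi1 : ((i : ℝ) + 1) ≠ 0 := by positivity
    field_simp
    ring
  have hS2 : (∑ i ∈ Finset.Icc 1 k,
        (k.choose i : ℝ) * (-1) ^ (i + 1) * ((1:ℝ) - (1:ℝ) ^ (i + 1) / (i + 1)) / i)
      - (∑ i ∈ Finset.Icc 1 k,
        (k.choose i : ℝ) * (-1) ^ (i + 1) * (τ - τ ^ (i + 1) / (i + 1)) / i)
      = ∑ i ∈ Finset.Icc 1 k,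
          (k.choose i : ℝ) * (-1) ^ (i + 1) *
            ((1 - τ) / i - (1 - τ ^ (i + 1)) / (i * (i + 1))) := by
    rw [← Finset.sum_sub_distrib]
    refine Finset.sum_congr rfl fun i hi => ?_
    have h1 : 1 ≤ i := (Finset.mem_Icc.mp hi).1
    have hi0 : (i : ℝ) ≠ 0 := by
      have : 0 < i := h1
      positivity
    have hi1 : ((i : ℝ) + 1) ≠ 0 := by positivity
    field_simp
    ring
  have hS34 : ∀ n : ℕ, (∑ i ∈ Finset.Icc 1 n, (n.choose i : ℝ) * (-1) ^ i * ((1:ℝ) ^ i / i))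
      - (∑ i ∈ Finset.Icc 1 n, (n.choose i : ℝ) * (-1) ^ i * (τ ^ i / i))
      = ∑ i ∈ Finset.Icc 1 n, (n.choose i : ℝ) * (-1) ^ i * (1 - τ ^ i) / i := by
    intro n
    rw [← Finset.sum_sub_distrib]
    refine Finset.sum_congr rfl fun i hi => ?_
    have h1 : 1 ≤ i := (Finset.mem_Icc.mp hi).1
    have hi0 : (i : ℝ) ≠ 0 := by
      have : 0 < i := h1
      positivity
    field_simp
    ring
  have hN : (-((1 - (1:ℝ)) ^ ((k + 1 + m₂) + 1) / (((k + 1 + m₂ : ℕ) : ℝ) + 1)))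
      - (-((1 - τ) ^ ((k + 1 + m₂) + 1) / (((k + 1 + m₂ : ℕ) : ℝ) + 1)))
      = (1 - τ) ^ (k + 2 + m₂) / ((k : ℝ) + 2 + (m₂ : ℝ)) := by
    have : (1 : ℝ) - 1 = 0 := by ring
    rw [this, zero_pow (by omega)]
    push_cast
    ring
  simp only [Faux]
  rw [show
      (τ * (∑ i ∈ Finset.Icc 1 (m - 1),
          ((m - 1).choose i : ℝ) * (-1) ^ (i + 1) * ((1:ℝ) ^ (i + 1) / (i + 1) - τ ^ i * 1) / i)
        + τ * (∑ i ∈ Finset.Icc 1 k,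
          (k.choose i : ℝ) * (-1) ^ (i + 1) * ((1:ℝ) - (1:ℝ) ^ (i + 1) / (i + 1)) / i)
        + (1 - δ) * τ / ((k : ℝ) + 1) *
          ((∑ i ∈ Finset.Icc 1 (k + 1), ((k + 1).choose i : ℝ) * (-1) ^ i * ((1:ℝ) ^ i / i))
            - (∑ i ∈ Finset.Icc 1 (k + 1 + m₂),
                ((k + 1 + m₂).choose i : ℝ) * (-1) ^ i * ((1:ℝ) ^ i / i)))
        + (1 - γ) / ((k : ℝ) + 1) *
          (-((1 - (1:ℝ)) ^ ((k + 1 + m₂) + 1) / (((k + 1 + m₂ : ℕ) : ℝ) + 1))))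
      - (τ * (∑ i ∈ Finset.Icc 1 (m - 1),
          ((m - 1).choose i : ℝ) * (-1) ^ (i + 1) * (τ ^ (i + 1) / (i + 1) - τ ^ i * τ) / i)
        + τ * (∑ i ∈ Finset.Icc 1 k,
          (k.choose i : ℝ) * (-1) ^ (i + 1) * (τ - τ ^ (i + 1) / (i + 1)) / i)
        + (1 - δ) * τ / ((k : ℝ) + 1) *
          ((∑ i ∈ Finset.Icc 1 (k + 1), ((k + 1).choose i : ℝ) * (-1) ^ i * (τ ^ i / i))
            - (∑ i ∈ Finset.Icc 1 (k + 1 + m₂),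
                ((k + 1 + m₂).choose i : ℝ) * (-1) ^ i * (τ ^ i / i)))
        + (1 - γ) / ((k : ℝ) + 1) *
          (-((1 - τ) ^ ((k + 1 + m₂) + 1) / (((k + 1 + m₂ : ℕ) : ℝ) + 1))))
      =
      τ * ((∑ i ∈ Finset.Icc 1 (m - 1),
          ((m - 1).choose i : ℝ) * (-1) ^ (i + 1) * ((1:ℝ) ^ (i + 1) / (i + 1) - τ ^ i * 1) / i)
        - (∑ i ∈ Finset.Icc 1 (m - 1),
          ((m - 1).choose i : ℝ) * (-1) ^ (i + 1) * (τ ^ (i + 1) / (i + 1) - τ ^ i * τ) / i))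
      + τ * ((∑ i ∈ Finset.Icc 1 k,
          (k.choose i : ℝ) * (-1) ^ (i + 1) * ((1:ℝ) - (1:ℝ) ^ (i + 1) / (i + 1)) / i)
        - (∑ i ∈ Finset.Icc 1 k,
          (k.choose i : ℝ) * (-1) ^ (i + 1) * (τ - τ ^ (i + 1) / (i + 1)) / i))
      + (1 - δ) * τ / ((k : ℝ) + 1) *
          (((∑ i ∈ Finset.Icc 1 (k + 1), ((k + 1).choose i : ℝ) * (-1) ^ i * ((1:ℝ) ^ i / i))
            - (∑ i ∈ Finset.Icc 1 (k + 1), ((k + 1).choose i : ℝ) * (-1) ^ i * (τ ^ i / i)))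
          - ((∑ i ∈ Finset.Icc 1 (k + 1 + m₂),
                ((k + 1 + m₂).choose i : ℝ) * (-1) ^ i * ((1:ℝ) ^ i / i))
            - (∑ i ∈ Finset.Icc 1 (k + 1 + m₂),
                ((k + 1 + m₂).choose i : ℝ) * (-1) ^ i * (τ ^ i / i))))
      + (1 - γ) / ((k : ℝ) + 1) *
          ((-((1 - (1:ℝ)) ^ ((k + 1 + m₂) + 1) / (((k + 1 + m₂ : ℕ) : ℝ) + 1)))
            - (-((1 - τ) ^ ((k + 1 + m₂) + 1) / (((k + 1 + m₂ : ℕ) : ℝ) + 1))))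
      from by ring]
  rw [hS1, hS2, hS34 (k + 1), hS34 (k + 1 + m₂), hN]
  push_cast
  ring
end

section
/- For all natural numbers k ≥ 0, m ≥ 0, m₂ ≥ 0 and every real number τ with 0 < τ ≤ 1, the iterated integral ∫_0^τ ( ∫_τ^1 [ (τ/t)·(1 - (1-t)^k)·(1 - (1-β)^m) + (1-t)^k·(1 - (1-β)^{m₂}) ] dt ) dβ equals -τ·( Σ_{i=1}^{k} C(k,i)·(-1)^i·(1 - τ^i)/i )·( τ - (1 - (1-τ)^{m+1})/(m+1) ) + ((1-τ)^{k+1}/(k+1))·( τ - (1 - (1-τ)^{m₂+1})/(m₂+1) ). -/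
theorem poly_id (k : ℕ) (t : ℝ) : 1 - (1-t)^k = -∑ i ∈ Finset.Icc 1 k, (k.choose i : ℝ) * (-1)^i * t^i := by
  have h : (1 - t)^k = ∑ i ∈ Finset.range (k+1), (-t)^i * (1:ℝ)^(k-i) * k.choose i := by
    rw [show (1:ℝ) - t = -t + 1 by ring, add_pow]
  have h2 : ∑ i ∈ Finset.Icc 1 k, (k.choose i : ℝ) * (-1)^i * t^i
      = ∑ i ∈ Finset.range k, (k.choose (1+i) : ℝ) * (-1)^(1+i) * t^(1+i) := by
    rw [← Finset.Ico_add_one_right_eq_Icc, Finset.sum_Ico_eq_sum_range]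
    simp
  rw [h, Finset.sum_range_succ', h2]
  simp only [one_pow, pow_zero, Nat.choose_zero_right, Nat.cast_one, one_mul, mul_one]
  rw [sub_add_eq_sub_sub, sub_sub_cancel_left, neg_inj]
  apply Finset.sum_congr rfl
  intro i _
  rw [add_comm 1 i, neg_pow]
  ring

theorem f1_int (k : ℕ) (τ : ℝ) (hτ : 0 < τ) (hτ1 : τ ≤ 1) :
    ∫ t in τ..1, (τ / t) * (1 - (1-t)^k)
      = -τ * ∑ i ∈ Finset.Icc 1 k, (k.choose i : ℝ) * (-1)^i * (1 - τ^i) / i := by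
  have hcong : Set.EqOn (fun t => (τ / t) * (1 - (1-t)^k))
      (fun t => ∑ i ∈ Finset.Icc 1 k, (-(k.choose i : ℝ) * (-1)^i * τ) * t^(i-1))
      (Set.uIcc τ 1) := by
    intro t ht
    rw [Set.uIcc_of_le hτ1] at ht
    have ht0 : (0:ℝ) < t := lt_of_lt_of_le hτ ht.1
    simp only
    rw [poly_id, ← Finset.sum_neg_distrib, Finset.mul_sum]
    apply Finset.sum_congr rfl
    intro i hi
    have hi1 : 1 ≤ i := (Finset.mem_Icc.mp hi).1
    have hpow : t ^ i = t ^ (i-1) * t := by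
      rw [← pow_succ, Nat.sub_add_cancel hi1]
    field_simp
    rw [hpow]
    ring
  rw [intervalIntegral.integral_congr hcong,
    intervalIntegral.integral_finset_sum]
  · rw [Finset.mul_sum]
    apply Finset.sum_congr rfl
    intro i hi
    have hi1 : 1 ≤ i := (Finset.mem_Icc.mp hi).1
    rw [intervalIntegral.integral_const_mul, integral_pow]
    have : i - 1 + 1 = i := Nat.sub_add_cancel hi1
    rw [this, show ((i-1:ℕ):ℝ) + 1 = i by rw [Nat.cast_sub hi1]; ring]
    ring
  · intro i hi
    exact (intervalIntegral.intervalIntegrable_pow (i-1)).const_mul _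

theorem Fm_int (m : ℕ) (τ : ℝ) :
    ∫ β in (0:ℝ)..τ, (1 - (1-β)^m) = τ - (1 - (1-τ)^(m+1))/(m+1) := by
  have h2 : ∫ β in (0:ℝ)..τ, (1-β)^m = (1 - (1-τ)^(m+1))/(m+1) := by
    have : ∫ β in (0:ℝ)..τ, (1-β)^m = ∫ u in (1-τ)..(1-(0:ℝ)), u^m :=
      intervalIntegral.integral_comp_sub_left (fun u => u^m) 1
    rw [this]; simp [integral_pow]
  rw [intervalIntegral.integral_sub intervalIntegrable_const
    ((Continuous.intervalIntegrable (by continuity) _ _)), h2]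
  simp

theorem stmt_11 (k m m₂ : ℕ) (τ : ℝ) (hτ : 0 < τ) (hτ1 : τ ≤ 1) :
    ∫ β in (0:ℝ)..τ, (∫ t in τ..1,
        ((τ / t) * (1 - (1 - t) ^ k) * (1 - (1 - β) ^ m)
          + (1 - t) ^ k * (1 - (1 - β) ^ m₂))) =
      -τ * (∑ i ∈ Finset.Icc 1 k,
            (k.choose i : ℝ) * (-1) ^ i * (1 - τ ^ i) / i) *
          (τ - (1 - (1 - τ) ^ (m + 1)) / (m + 1))
        + ((1 - τ) ^ (k + 1) / (k + 1)) *
          (τ - (1 - (1 - τ) ^ (m₂ + 1)) / (m₂ + 1)) := by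
  set A : ℝ := -τ * ∑ i ∈ Finset.Icc 1 k, (k.choose i : ℝ) * (-1)^i * (1 - τ^i) / i with hA
  set B : ℝ := (1-τ)^(k+1)/(k+1) with hB
  have hf1 : IntervalIntegrable (fun t => (τ / t) * (1 - (1-t)^k)) MeasureTheory.volume τ 1 := by
    apply ContinuousOn.intervalIntegrable
    apply ContinuousOn.mul
    · apply ContinuousOn.div continuousOn_const continuousOn_id
      intro x hx
      rw [Set.uIcc_of_le hτ1] at hx
      exact ne_of_gt (lt_of_lt_of_le hτ hx.1)
    · exact (Continuous.continuousOn (by continuity))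
  have hf2 : IntervalIntegrable (fun t => (1-t)^k) MeasureTheory.volume τ 1 :=
    Continuous.intervalIntegrable (by continuity) _ _
  have hBint : ∫ t in τ..1, (1-t)^k = B := by
    have : ∫ t in τ..1, (1-t)^k = ∫ u in (1-(1:ℝ))..(1-τ), u^k :=
      intervalIntegral.integral_comp_sub_left (fun u => u^k) 1
    rw [this]; simp [integral_pow, hB]
  have inner : ∀ β : ℝ, (∫ t in τ..1,
        ((τ / t) * (1 - (1 - t) ^ k) * (1 - (1 - β) ^ m)
          + (1 - t) ^ k * (1 - (1 - β) ^ m₂)))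
      = A * (1 - (1-β)^m) + B * (1 - (1-β)^m₂) := by
    intro β
    rw [intervalIntegral.integral_add (hf1.mul_const _) (hf2.mul_const _),
      intervalIntegral.integral_mul_const, intervalIntegral.integral_mul_const,
      f1_int k τ hτ hτ1, hBint, ← hA]
  rw [funext inner]
  have hAc : IntervalIntegrable (fun β : ℝ => A * (1 - (1-β)^m)) MeasureTheory.volume 0 τ :=
    Continuous.intervalIntegrable (by continuity) _ _
  have hBc : IntervalIntegrable (fun β : ℝ => B * (1 - (1-β)^m₂)) MeasureTheory.volume 0 τ :=
    Continuous.intervalIntegrable (by continuity) _ _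
  rw [intervalIntegral.integral_add hAc hBc, intervalIntegral.integral_const_mul,
    intervalIntegral.integral_const_mul, Fm_int, Fm_int]
end

section
/- Fix natural numbers m ≥ 1, k ≥ 0, m₂ ≥ 0, a real number δ, and a real number τ with 0 < τ ≤ 1. Define for β ∈ (0,1] the function C₅(β) = τ·Σ_{i=1}^{m-1} C(m-1,i)·(-1)^{i+1}·(β^i - τ^i)/i + ((1-τ)^m - (1-β)^m)/m + τ·Σ_{i=1}^{k} C(k,i)·(-1)^{i+1}·((1-β^i)/i)·(1 - (1-β)^{m-1}) + ((1-β)^{k+1}/(k+1))·(1 - (1-β)^{m₂})·(1-δ)·(τ/β). Then ∫_τ^1 C₅(β) dβ ≥ τ·Σ_{i=1}^{m-1} C(m-1,i)·(-1)^{i+1}·( (1-τ^{i+1})/(i(i+1)) - τ^i·(1-τ)/i ) + (1-τ)^m·(1-τ)/m - (1-τ)^{m+1}/(m(m+1)) + τ·Σ_{i=1}^{k} C(k,i)·(-1)^{i+1}·(1/i)·[ (1-τ) - (1-τ^{i+1})/(i+1) - (1-τ)^m/m + i!·(m-1)!/(i+m)! - ∫_0^τ β^i·(1-β)^{m-1}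 dβ ] + ((1-δ)·τ/(k+1))·[ Σ_{i=1}^{k+1} C(k+1,i)·(-1)^i·(1-τ^i)/i - Σ_{i=1}^{k+1+m₂} C(k+1+m₂,i)·(-1)^i·(1-τ^i)/i ]. -/
theorem prod_fact' (i : ℕ) : ∀ n : ℕ, (∏ j ∈ Finset.range (n+1), (i+1+j)) * Nat.factorial i = Nat.factorial (i+n+1)
  | 0 => by simp [Nat.factorial_succ]
  | (n+1) => by
      rw [Finset.prod_range_succ, mul_right_comm, prod_fact' i n,
        show i+(n+1)+1 = (i+n+1)+1 by ring, Nat.factorial_succ (i+n+1)]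
      ring

open Complex in
theorem beta_nat' (i n : ℕ) : ∫ x in (0:ℝ)..1, x^i * (1-x)^n
    = (Nat.factorial i : ℝ) * (Nat.factorial n) / (Nat.factorial (i+n+1)) := by
  have hu : 0 < re ((i:ℂ)+1) := by simp; positivity
  have h := Complex.betaIntegral_eval_nat_add_one_right hu n
  rw [Complex.betaIntegral] at h
  have heq : ∀ x : ℝ, ((x:ℂ)) ^ (((i:ℂ)+1) - 1) * ((1:ℂ) - x) ^ (((n:ℂ)+1) - 1)
      = ((x^i * (1-x)^n : ℝ) : ℂ) := by
    intro x
    rw [show ((i:ℂ)+1) - 1 = ((i:ℕ):ℂ) by ring, show ((n:ℂ)+1) - 1 = ((n:ℕ):ℂ) by ring,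
      Complex.cpow_natCast, Complex.cpow_natCast]
    push_cast; ring
  simp only [heq] at h
  rw [intervalIntegral.integral_ofReal] at h
  have hi : (Nat.factorial i : ℂ) ≠ 0 := Nat.cast_ne_zero.mpr i.factorial_ne_zero
  have hprod : (∏ j ∈ Finset.range (n+1), ((i:ℂ) + 1 + (j:ℕ)))
      = ((Nat.factorial (i+n+1) : ℂ)) / (Nat.factorial i : ℂ) := by
    rw [eq_div_iff hi]
    have := congrArg (Nat.cast : ℕ → ℂ) (prod_fact' i n)
    push_cast at this
    convert this using 2
  rw [hprod] at h
  have hin : (Nat.factorial (i+n+1) : ℂ) ≠ 0 := Nat.cast_ne_zero.mpr (i+n+1).factorial_ne_zero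
  have : ((∫ x in (0:ℝ)..1, x^i * (1-x)^n : ℝ) : ℂ) = ((Nat.factorial i : ℝ) * (Nat.factorial n) / (Nat.factorial (i+n+1)) : ℝ) := by
    rw [h]; push_cast; rw [div_div_eq_mul_div]; ring
  exact_mod_cast this

theorem int_one_sub_pow' (n : ℕ) (a b : ℝ) : ∫ x in a..b, (1-x)^n = ((1-a)^(n+1) - (1-b)^(n+1))/(n+1) := by
  have := intervalIntegral.integral_comp_sub_left (a := a) (b := b) (fun x : ℝ => x ^ n) 1
  rw [this, integral_pow]

theorem binom_aux' (n : ℕ) (x : ℝ) : 1 - (1-x)^n = ∑ j ∈ Finset.range n, ((n.choose (j+1) : ℝ)) * (-1)^j * x^(j+1) := by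
  have h : (1 - x) ^ n = ((-x) + 1)^n := by ring_nf
  rw [h, add_pow, Finset.sum_range_succ']
  simp only [pow_zero, one_pow, Nat.choose_zero_right, Nat.cast_one, mul_one, one_mul]
  rw [show ∀ a : ℝ, 1 - (a + 1) = -a from fun a => by ring, ← Finset.sum_neg_distrib]
  apply Finset.sum_congr rfl
  intro j _
  ring

theorem E1' (n : ℕ) (τ : ℝ) :
    ∫ β in τ..1, τ * (∑ i ∈ Finset.Icc 1 n, ((n.choose i : ℝ)) * (-1)^(i+1) * (β^i - τ^i)/i)
    = τ * ∑ i ∈ Finset.Icc 1 n, ((n.choose i:ℝ)) * (-1)^(i+1) * ((1-τ^(i+1))/(i*(i+1)) - τ^i*(1-τ)/i) := by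
  rw [intervalIntegral.integral_const_mul, intervalIntegral.integral_finset_sum
    (fun i _ => by apply Continuous.intervalIntegrable; fun_prop)]
  congr 1
  apply Finset.sum_congr rfl
  intro i hi
  have hi1 : 1 ≤ i := (Finset.mem_Icc.mp hi).1
  have hi0 : (i:ℝ) ≠ 0 := Nat.cast_ne_zero.mpr (by omega)
  have hi10 : (i:ℝ) + 1 ≠ 0 := by positivity
  rw [show (fun β : ℝ => (n.choose i : ℝ) * (-1)^(i+1) * (β^i - τ^i)/i)
      = fun β : ℝ => ((n.choose i : ℝ) * (-1)^(i+1)/i) * (β^i - τ^i) from funext fun β => by ring,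
    intervalIntegral.integral_const_mul,
    intervalIntegral.integral_sub ((continuous_pow i).intervalIntegrable _ _)
      intervalIntegrable_const,
    integral_pow, intervalIntegral.integral_const]
  rw [smul_eq_mul, one_pow]
  field_simp

theorem E2' (m : ℕ) (hm : 1 ≤ m) (τ : ℝ) :
    ∫ β in τ..1, ((1-τ)^m - (1-β)^m)/m
    = (1-τ)^m * (1-τ)/m - (1-τ)^(m+1)/(m*(m+1)) := by
  have hm0 : (m:ℝ) ≠ 0 := Nat.cast_ne_zero.mpr (by omega)
  have hm1 : (m:ℝ) + 1 ≠ 0 := by positivity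
  rw [intervalIntegral.integral_div,
    intervalIntegral.integral_sub intervalIntegrable_const
      (Continuous.intervalIntegrable (by fun_prop) _ _),
    intervalIntegral.integral_const, int_one_sub_pow', smul_eq_mul]
  rw [sub_self, zero_pow (by omega)]
  field_simp
  ring

theorem E3' (k m : ℕ) (hm : 1 ≤ m) (τ : ℝ) (hτ : 0 < τ) (hτ1 : τ ≤ 1) :
    ∫ β in τ..1, τ * (∑ i ∈ Finset.Icc 1 k,
            (k.choose i : ℝ) * (-1) ^ (i + 1) * ((1 - β ^ i) / i) *
              (1 - (1 - β) ^ (m - 1)))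
    = τ * (∑ i ∈ Finset.Icc 1 k,
          (k.choose i : ℝ) * (-1) ^ (i + 1) * (1 / i) *
            ((1 - τ) - (1 - τ ^ (i + 1)) / (i + 1) - (1 - τ) ^ m / m
              + ((Nat.factorial i : ℝ) * (Nat.factorial (m - 1)) /
                  (Nat.factorial (i + m)))
              - ∫ β in (0:ℝ)..τ, β ^ i * (1 - β) ^ (m - 1))) := by
  have hm0 : (m:ℝ) ≠ 0 := Nat.cast_ne_zero.mpr (by omega)
  rw [intervalIntegral.integral_const_mul, intervalIntegral.integral_finset_sum
    (fun i _ => by apply Continuous.intervalIntegrable; fun_prop)]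
  congr 1
  apply Finset.sum_congr rfl
  intro i hi
  have hi1 : 1 ≤ i := (Finset.mem_Icc.mp hi).1
  have hi0 : (i:ℝ) ≠ 0 := Nat.cast_ne_zero.mpr (by omega)
  have hi10 : (i:ℝ) + 1 ≠ 0 := by positivity
  set n := m - 1 with hn
  have hmn : m = n + 1 := by omega
  rw [show (fun β : ℝ => (k.choose i : ℝ) * (-1)^(i+1) * ((1 - β^i)/i) * (1-(1-β)^n))
      = fun β : ℝ => ((k.choose i : ℝ) * (-1)^(i+1)/i) *
        (((1 : ℝ) - β^i - (1-β)^n) + β^i * (1-β)^n) from funext fun β => by ring,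
    intervalIntegral.integral_const_mul]
  have hInt : ∫ β in τ..1, β^i * (1-β)^n
      = (Nat.factorial i : ℝ) * (Nat.factorial n) / (Nat.factorial (i+n+1))
        - ∫ β in (0:ℝ)..τ, β^i * (1-β)^n := by
    have hc : ∀ a b : ℝ, IntervalIntegrable (fun β : ℝ => β^i * (1-β)^n)
        MeasureTheory.volume a b := fun a b =>
      Continuous.intervalIntegrable (by fun_prop) a b
    have hadj := intervalIntegral.integral_add_adjacent_intervals
      (a := (0:ℝ)) (b := τ) (c := 1)
      (hc 0 τ) (hc τ 1)
    rw [← beta_nat' i n, ← hadj]; ring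
  rw [intervalIntegral.integral_add
      (Continuous.intervalIntegrable (by fun_prop) _ _)
      (Continuous.intervalIntegrable (by fun_prop) _ _),
    intervalIntegral.integral_sub
      (Continuous.intervalIntegrable (by fun_prop) _ _)
      (Continuous.intervalIntegrable (by fun_prop) _ _),
    intervalIntegral.integral_sub intervalIntegrable_const
      (Continuous.intervalIntegrable (by fun_prop) _ _),
    intervalIntegral.integral_const, integral_pow, int_one_sub_pow', hInt, smul_eq_mul,
    one_pow, sub_self, zero_pow (by omega), mul_one]
  rw [show i + n + 1 = i + m by omega, show (n:ℝ) + 1 = (m:ℝ) by rw [hmn]; push_cast; ring,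
    show (1-τ)^(n+1) = (1-τ)^m by rw [← hmn]]
  field_simp
  ring

theorem L4' (n : ℕ) (τ : ℝ) (hτ : 0 < τ) (hτ1 : τ ≤ 1) :
    ∫ β in τ..1, (1-(1-β)^n)/β
    = ∑ i ∈ Finset.Icc 1 n, ((n.choose i : ℝ)) * (-1)^(i+1) * (1-τ^i)/i := by
  have h1 : Set.EqOn (fun β : ℝ => (1-(1-β)^n)/β)
      (fun β : ℝ => ∑ j ∈ Finset.range n, ((n.choose (j+1) : ℝ)) * (-1)^j * β^j)
      (Set.uIcc τ 1) := by
    intro β hβ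
    rw [Set.uIcc_of_le hτ1] at hβ
    have hβ0 : β ≠ 0 := ne_of_gt (lt_of_lt_of_le hτ hβ.1)
    simp only
    rw [binom_aux', Finset.sum_div]
    apply Finset.sum_congr rfl
    intro j _
    field_simp
    ring
  rw [intervalIntegral.integral_congr h1, intervalIntegral.integral_finset_sum
    (fun j _ => Continuous.intervalIntegrable (by fun_prop) _ _)]
  rw [← Finset.Ico_add_one_right_eq_Icc, Finset.sum_Ico_eq_sum_range]
  apply Finset.sum_congr rfl
  intro j _
  rw [intervalIntegral.integral_const_mul, integral_pow, one_pow]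
  rw [show 1 + j = j + 1 from add_comm 1 j, show ((-1:ℝ))^(j+1+1) = (-1)^j by
    rw [pow_succ, pow_succ]; ring]
  push_cast
  ring

theorem intdiv' (n : ℕ) (τ : ℝ) (hτ : 0 < τ) (hτ1 : τ ≤ 1) :
    IntervalIntegrable (fun β : ℝ => (1 - (1-β)^n)/β) MeasureTheory.volume τ 1 := by
  apply ContinuousOn.intervalIntegrable
  apply ContinuousOn.div (by fun_prop) continuousOn_id
  intro β hβ
  rw [Set.uIcc_of_le hτ1] at hβ
  exact ne_of_gt (lt_of_lt_of_le hτ hβ.1)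

theorem E4' (k m₂ : ℕ) (δ τ : ℝ) (hτ : 0 < τ) (hτ1 : τ ≤ 1) :
    ∫ β in τ..1, ((1-β)^(k+1)/(k+1)) * (1-(1-β)^m₂) * (1-δ) * (τ/β)
    = ((1-δ)*τ/(k+1)) * ((∑ i ∈ Finset.Icc 1 (k+1), (((k+1).choose i:ℝ))*(-1)^i*(1-τ^i)/i)
        - ∑ i ∈ Finset.Icc 1 (k+1+m₂), (((k+1+m₂).choose i:ℝ))*(-1)^i*(1-τ^i)/i) := by
  have heq : Set.EqOn (fun β : ℝ => ((1-β)^(k+1)/(k+1)) * (1-(1-β)^m₂) * (1-δ) * (τ/β))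
      (fun β : ℝ => ((1-δ)*τ/((k:ℝ)+1)) * ((1-(1-β)^(k+1+m₂))/β - (1-(1-β)^(k+1))/β))
      (Set.uIcc τ 1) := by
    intro β hβ
    rw [Set.uIcc_of_le hτ1] at hβ
    have hβ0 : β ≠ 0 := ne_of_gt (lt_of_lt_of_le hτ hβ.1)
    have hk0 : ((k:ℝ)+1) ≠ 0 := by positivity
    simp only
    rw [pow_add]
    field_simp
    ring
  rw [intervalIntegral.integral_congr heq, intervalIntegral.integral_const_mul,
    intervalIntegral.integral_sub (intdiv' _ _ hτ hτ1) (intdiv' _ _ hτ hτ1),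
    L4' _ _ hτ hτ1, L4' _ _ hτ hτ1]
  have hswap : ∀ N : ℕ, (∑ i ∈ Finset.Icc 1 N, ((N.choose i:ℝ))*(-1)^i*(1-τ^i)/i)
      = -∑ i ∈ Finset.Icc 1 N, ((N.choose i:ℝ))*(-1)^(i+1)*(1-τ^i)/i := by
    intro N
    rw [← Finset.sum_neg_distrib]
    exact Finset.sum_congr rfl fun i _ => by ring
  rw [hswap, hswap]
  ring

theorem stmt_12 (m k m₂ : ℕ) (hm : 1 ≤ m) (δ τ : ℝ) (hτ : 0 < τ) (hτ1 : τ ≤ 1) :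
    ∫ β in τ..1,
        (τ * (∑ i ∈ Finset.Icc 1 (m - 1),
            ((m - 1).choose i : ℝ) * (-1) ^ (i + 1) * (β ^ i - τ ^ i) / i)
          + ((1 - τ) ^ m - (1 - β) ^ m) / m
          + τ * (∑ i ∈ Finset.Icc 1 k,
            (k.choose i : ℝ) * (-1) ^ (i + 1) * ((1 - β ^ i) / i) *
              (1 - (1 - β) ^ (m - 1)))
          + ((1 - β) ^ (k + 1) / (k + 1)) * (1 - (1 - β) ^ m₂) * (1 - δ) * (τ / β)) ≥
      τ * (∑ i ∈ Finset.Icc 1 (m - 1),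
          ((m - 1).choose i : ℝ) * (-1) ^ (i + 1) *
            ((1 - τ ^ (i + 1)) / (i * (i + 1)) - τ ^ i * (1 - τ) / i))
        + (1 - τ) ^ m * (1 - τ) / m - (1 - τ) ^ (m + 1) / (m * (m + 1))
        + τ * (∑ i ∈ Finset.Icc 1 k,
          (k.choose i : ℝ) * (-1) ^ (i + 1) * (1 / i) *
            ((1 - τ) - (1 - τ ^ (i + 1)) / (i + 1) - (1 - τ) ^ m / m
              + ((Nat.factorial i : ℝ) * (Nat.factorial (m - 1)) /
                  (Nat.factorial (i + m)))
              - ∫ β in (0:ℝ)..τ, β ^ i * (1 - β) ^ (m - 1)))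
        + ((1 - δ) * τ / (k + 1)) *
          ((∑ i ∈ Finset.Icc 1 (k + 1),
              ((k + 1).choose i : ℝ) * (-1) ^ i * (1 - τ ^ i) / i)
            - (∑ i ∈ Finset.Icc 1 (k + 1 + m₂),
              ((k + 1 + m₂).choose i : ℝ) * (-1) ^ i * (1 - τ ^ i) / i)) := by
  have hc1 : Continuous (fun β : ℝ => τ * (∑ i ∈ Finset.Icc 1 (m - 1),
      ((m - 1).choose i : ℝ) * (-1) ^ (i + 1) * (β ^ i - τ ^ i) / i)) := by fun_prop
  have hc2 : Continuous (fun β : ℝ => ((1 - τ) ^ m - (1 - β) ^ m) / (m:ℝ)) := by fun_prop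
  have hc3 : Continuous (fun β : ℝ => τ * (∑ i ∈ Finset.Icc 1 k,
      (k.choose i : ℝ) * (-1) ^ (i + 1) * ((1 - β ^ i) / i) * (1 - (1 - β) ^ (m - 1)))) := by
    fun_prop
  have hi4 : IntervalIntegrable (fun β : ℝ =>
      ((1 - β) ^ (k + 1) / ((k:ℝ) + 1)) * (1 - (1 - β) ^ m₂) * (1 - δ) * (τ / β))
      MeasureTheory.volume τ 1 := by
    apply ContinuousOn.intervalIntegrable
    apply ContinuousOn.mul (by fun_prop)
    apply ContinuousOn.div continuousOn_const continuousOn_id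
    intro β hβ
    rw [Set.uIcc_of_le hτ1] at hβ
    exact ne_of_gt (lt_of_lt_of_le hτ hβ.1)
  rw [ge_iff_le]
  apply le_of_eq
  rw [intervalIntegral.integral_add (Continuous.intervalIntegrable (by fun_prop) _ _) hi4,
    intervalIntegral.integral_add (Continuous.intervalIntegrable (by fun_prop) _ _)
      (hc3.intervalIntegrable _ _),
    intervalIntegral.integral_add (hc1.intervalIntegrable _ _) (hc2.intervalIntegrable _ _),
    E1', E2' m hm, E3' k m hm τ hτ hτ1, E4' k m₂ δ τ hτ hτ1]
  ring
end

section
/- For every natural number m ≥ 1, all real numbers γ and δ, and every real number τ with 0 < τ ≤ 1, the quantity δ·τ·∫_τ^1 (1 - (1-t)^{m-1})/t dt + γ·∫_τ^1 (1-t)^{m-1} dt equals δ·τ·Σ_{i=1}^{m-1} C(m-1,i)·(-1)^{i+1}·(1 - τ^i)/i + γ·(1-τ)^m/m. -/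
lemma binom_identity_aux (n : ℕ) (t : ℝ) :
    ∑ i ∈ Finset.Icc 1 n, ((n.choose i : ℝ) * (-1) ^ (i + 1) * t ^ i) = 1 - (1 - t) ^ n := by
  have h : (1 - t) ^ n = ((-t) + 1) ^ n := by ring_nf
  rw [h, add_pow, Finset.sum_range_succ', show Finset.Icc 1 n = Finset.Ico 1 (n + 1) by
    rw [Finset.Ico_add_one_right_eq_Icc], Finset.sum_Ico_eq_sum_range]
  simp only [Nat.add_sub_cancel, Nat.choose_zero_right, pow_zero, one_pow, one_mul, mul_one,
    Nat.cast_one]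
  have key : ∑ i ∈ Finset.range n, ((n.choose (1 + i) : ℝ) * (-1) ^ (1 + i + 1) * t ^ (1 + i))
      = ∑ i ∈ Finset.range n, -((-t) ^ (i + 1) * (n.choose (i + 1) : ℝ)) := by
    apply Finset.sum_congr rfl
    intro i _
    rw [add_comm 1 i, neg_pow]
    ring
  rw [key, Finset.sum_neg_distrib]
  ring

theorem stmt_16 (m : ℕ) (hm : 1 ≤ m) (γ δ τ : ℝ) (hτ : 0 < τ) (hτ1 : τ ≤ 1) :
    δ * τ * (∫ t in τ..1, (1 - (1 - t) ^ (m - 1)) / t)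
        + γ * (∫ t in τ..1, (1 - t) ^ (m - 1)) =
      δ * τ * (∑ i ∈ Finset.Icc 1 (m - 1),
          ((m - 1).choose i : ℝ) * (-1) ^ (i + 1) * (1 - τ ^ i) / i)
        + γ * (1 - τ) ^ m / m := by
  obtain ⟨n, rfl⟩ : ∃ n, m = n + 1 := ⟨m - 1, (Nat.succ_pred_eq_of_pos hm).symm⟩
  simp only [Nat.add_sub_cancel]
  have hI2 : (∫ t in τ..1, (1 - t) ^ n) = (1 - τ) ^ (n + 1) / (n + 1) := by
    have h := intervalIntegral.integral_comp_sub_left (a := τ) (b := 1) (fun x : ℝ => x ^ n) 1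
    simp only [sub_self] at h
    rw [h, integral_pow]
    norm_num
  have hI1 : (∫ t in τ..1, (1 - (1 - t) ^ n) / t)
      = ∑ i ∈ Finset.Icc 1 n, ((n.choose i : ℝ) * (-1) ^ (i + 1) * (1 - τ ^ i) / i) := by
    have hcong : Set.EqOn (fun t : ℝ => (1 - (1 - t) ^ n) / t)
        (fun t : ℝ => ∑ i ∈ Finset.Icc 1 n, ((n.choose i : ℝ) * (-1) ^ (i + 1) * t ^ (i - 1)))
        (Set.uIcc τ 1) := by
      intro t ht
      rw [Set.uIcc_of_le hτ1] at ht
      have ht0 : (0 : ℝ) < t := lt_of_lt_of_le hτ ht.1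
      simp only
      rw [← binom_identity_aux n t, Finset.sum_div]
      apply Finset.sum_congr rfl
      intro i hi
      have hi1 : 1 ≤ i := (Finset.mem_Icc.mp hi).1
      obtain ⟨j, rfl⟩ : ∃ j, i = j + 1 := ⟨i - 1, (Nat.succ_pred_eq_of_pos hi1).symm⟩
      rw [Nat.add_sub_cancel]
      field_simp
      ring
    rw [intervalIntegral.integral_congr hcong,
      intervalIntegral.integral_finset_sum]
    · apply Finset.sum_congr rfl
      intro i hi
      have hi1 : 1 ≤ i := (Finset.mem_Icc.mp hi).1
      obtain ⟨j, rfl⟩ : ∃ j, i = j + 1 := ⟨i - 1, (Nat.succ_pred_eq_of_pos hi1).symm⟩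
      rw [intervalIntegral.integral_const_mul, integral_pow, Nat.add_sub_cancel]
      push_cast
      ring
    · intro i _
      exact (continuous_const.mul (continuous_pow _)).intervalIntegrable _ _
  rw [hI1, hI2]
  push_cast
  ring
end
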